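/- Consider the n-qubit network Lindblad equation with diffusive coupling on a connected weighted graph, let 𝒬 : M → M be the induced Laplacian superoperator 𝒬ρ := Σ_{1≤j<k≤n} a_{jk}(ρ − Θ_{jk}ρ) with smallest nonzero eigenvalue λ_m(𝒬) > 0, and let ‖𝒜‖ be the operator norm of 𝒜 with respect to ‖·‖_F. If a K-solution ρ additionally satisfies P*(ρ(0)) = ρ(0) (i.e., the initial state is permutation invariant), then for all t ≥ 0: ‖ρ(t) − P*(ρ(t))‖_F ≤ ‖𝒜‖/(Kλ_m(𝒬)); in particular, for every η > 0 there exists K* > 0 such that for all K ≥ K* every such K-solution satisfies ‖ρ(t) − P*(ρ(t))‖_F ≤ η for all t ≥ 0. -/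

import Mathlib

/-! Statement 10: for permutation-invariant initial states, the distance of the
network state from its permutation-invariant projection is bounded by
‖𝒜‖/(Kλ_m(𝒬)) for all time, hence can be made uniformly smaller than any η by
taking the coupling gain large enough. -/

open Finset Matrix
open scoped ComplexOrder

attribute [local instance] Matrix.frobeniusSeminormedAddCommGroup
  Matrix.frobeniusNormedAddCommGroup Matrix.frobeniusNormedSpace

noncomputable section

/-- Matrices on the `n`-qubit Hilbert space, indexed by functions `Fin n → Fin 2`,
equipped with the Frobenius norm. -/
abbrev QMat (n : ℕ) : Type := Matrix (Fin n → Fin 2) (Fin n → Fin 2) ℂ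

/-- The Lindblad dissipator `D(L)ρ = LρL† - (1/2)(L†Lρ + ρL†L)`. -/
def dissip {n : ℕ} (L X : QMat n) : QMat n :=
  L * X * Lᴴ - (1 / 2 : ℂ) • (Lᴴ * L * X + X * (Lᴴ * L))

/-- The drift superoperator `𝒜ρ = -(i/ℏ)[H,ρ] + Σ_l γ_l D(L_l)ρ`. -/
def drift {n : ℕ} {ι : Type} [Fintype ι] (hbar : ℝ) (H : QMat n) (γ : ι → ℝ)
    (L : ι → QMat n) (X : QMat n) : QMat n :=
  (-(Complex.I / (hbar : ℂ))) • (H * X - X * H) + ∑ l, (γ l : ℂ) • dissip (L l) X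

/-- The swap conjugation `Θ_{jk}ρ = U_{jk} ρ U_{jk}†`. -/
def swapConj {n : ℕ} (j k : Fin n) (X : QMat n) : QMat n :=
  Matrix.of fun f g => X (f ∘ Equiv.swap j k) (g ∘ Equiv.swap j k)

/-- The diffusive coupling term `Σ_{j<k} a_{jk} (Θ_{jk}ρ - ρ)`. -/
def coupling {n : ℕ} (a : Fin n → Fin n → ℝ) (X : QMat n) : QMat n :=
  ∑ j, ∑ k, if j < k then a j k • (swapConj j k X - X) else 0

/-- The permutation-invariant projection `(P*ρ)(f,g) = (1/n!) Σ_π ρ(f∘π, g∘π)`. -/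
def permProj {n : ℕ} (X : QMat n) : QMat n :=
  Matrix.of fun f g => (n.factorial : ℂ)⁻¹ * ∑ π : Equiv.Perm (Fin n), X (f ∘ π) (g ∘ π)

/-- The induced Laplacian superoperator `𝒬ρ = Σ_{j<k} a_{jk} (ρ - Θ_{jk}ρ)`. -/
def lapSup {n : ℕ} (a : Fin n → Fin n → ℝ) (X : QMat n) : QMat n :=
  ∑ j, ∑ k, if j < k then a j k • (X - swapConj j k X) else 0

-- ## auxiliary development

/-- conjugation by a general permutation -/
def permConj {n : ℕ} (π : Equiv.Perm (Fin n)) (X : QMat n) : QMat n :=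
  Matrix.of fun f g => X (f ∘ π) (g ∘ π)

abbrev Vq (n : ℕ) : Type := EuclideanSpace ℂ ((Fin n → Fin 2) × (Fin n → Fin 2))

def toEL (n : ℕ) : QMat n ≃ₗ[ℂ] Vq n where
  toFun X := WithLp.toLp 2 (fun p : (Fin n → Fin 2) × (Fin n → Fin 2) => X p.1 p.2)
  invFun v := Matrix.of fun f g => v (f, g)
  map_add' X Y := rfl
  map_smul' c X := rfl
  left_inv X := rfl
  right_inv v := rfl

@[simp] lemma toEL_apply {n : ℕ} (X : QMat n) (p) : toEL n X p = X p.1 p.2 := rfl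

lemma norm_toEL {n : ℕ} (X : QMat n) : ‖toEL n X‖ = ‖X‖ := by
  rw [EuclideanSpace.norm_eq, Matrix.frobenius_norm_def, Fintype.sum_prod_type]
  rw [Real.sqrt_eq_rpow]
  simp

def eQ (n : ℕ) : QMat n ≃ₗᵢ[ℂ] Vq n := ⟨toEL n, norm_toEL⟩

local notation "⟪" x ", " y "⟫" => @inner ℂ _ _ x y

lemma inner_eQ {n : ℕ} (X Y : QMat n) :
    ⟪eQ n X, eQ n Y⟫ = ∑ f, ∑ g, (starRingEnd ℂ) (X f g) * Y f g := by
  rw [show (eQ n X) = toEL n X from rfl, show (eQ n Y) = toEL n Y from rfl,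
    PiLp.inner_apply, Fintype.sum_prod_type]
  simp [RCLike.inner_apply]
  exact Finset.sum_congr rfl fun f _ => Finset.sum_congr rfl fun g _ => mul_comm _ _

lemma sum_comp_perm {n : ℕ} (π : Equiv.Perm (Fin n)) (φ : (Fin n → Fin 2) → ℂ) :
    ∑ f, φ (f ∘ π) = ∑ f, φ f := by
  exact Fintype.sum_bijective (fun f => f ∘ π)
    (Equiv.bijective ⟨fun f => f ∘ π, fun f => f ∘ π.symm,
      fun f => by ext i; simp, fun f => by ext i; simp⟩)
    _ _ (fun f => rfl)

lemma permConj_permConj {n : ℕ} (π σ : Equiv.Perm (Fin n)) (X : QMat n) :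
    permConj π (permConj σ X) = permConj (π * σ) X := by
  ext f g; simp [permConj]; rfl

lemma permConj_one {n : ℕ} (X : QMat n) : permConj (1 : Equiv.Perm (Fin n)) X = X := by
  ext f g; simp [permConj]

lemma swapConj_eq_permConj {n : ℕ} (j k : Fin n) (X : QMat n) :
    swapConj j k X = permConj (Equiv.swap j k) X := rfl

lemma inner_permConj {n : ℕ} (π : Equiv.Perm (Fin n)) (X Y : QMat n) :
    ⟪eQ n (permConj π X), eQ n (permConj π Y)⟫ = ⟪eQ n X, eQ n Y⟫ := by
  rw [inner_eQ, inner_eQ]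
  rw [show (∑ f, ∑ g, (starRingEnd ℂ) (permConj π X f g) * (permConj π Y f g))
      = ∑ f, ∑ g, (starRingEnd ℂ) (X (f ∘ π) (g ∘ π)) * (Y (f ∘ π) (g ∘ π)) from rfl]
  rw [sum_comp_perm π (fun f => ∑ g, (starRingEnd ℂ) (X f (g ∘ π)) * (Y f (g ∘ π)))]
  exact Finset.sum_congr rfl fun f _ =>
      sum_comp_perm π (fun g => (starRingEnd ℂ) (X f g) * (Y f g))

lemma inner_permConj_left {n : ℕ} (π : Equiv.Perm (Fin n)) (X Y : QMat n) :
    ⟪eQ n (permConj π X), eQ n Y⟫ = ⟪eQ n X, eQ n (permConj π⁻¹ Y)⟫ := by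
  conv_lhs => rw [← inner_permConj π⁻¹, permConj_permConj, inv_mul_cancel, permConj_one]

lemma real_smul_eq {n : ℕ} (r : ℝ) (M : QMat n) : r • M = (r : ℂ) • M := by
  rw [← algebraMap_smul ℂ r M, Complex.coe_algebraMap]

def permProjL (n : ℕ) : QMat n →ₗ[ℂ] QMat n where
  toFun := permProj
  map_add' X Y := by
    ext f g
    simp [permProj, Matrix.add_apply, Finset.sum_add_distrib, mul_add]
  map_smul' c X := by
    ext f g
    simp [permProj, Matrix.smul_apply, smul_eq_mul, Finset.mul_sum, mul_left_comm]

lemma swapConj_add {n : ℕ} (j k : Fin n) (X Y : QMat n) :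
    swapConj j k (X + Y) = swapConj j k X + swapConj j k Y := by
  ext f g; simp [swapConj, Matrix.add_apply]

lemma swapConj_csmul {n : ℕ} (j k : Fin n) (c : ℂ) (X : QMat n) :
    swapConj j k (c • X) = c • swapConj j k X := by
  ext f g; simp [swapConj, Matrix.smul_apply]

def lapSupL {n : ℕ} (a : Fin n → Fin n → ℝ) : QMat n →ₗ[ℂ] QMat n where
  toFun := lapSup a
  map_add' X Y := by
    unfold lapSup
    rw [← Finset.sum_add_distrib]
    refine Finset.sum_congr rfl fun j _ => ?_
    rw [← Finset.sum_add_distrib]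
    refine Finset.sum_congr rfl fun k _ => ?_
    by_cases h : j < k
    · simp only [if_pos h, swapConj_add]
      rw [show X + Y - (swapConj j k X + swapConj j k Y)
          = (X - swapConj j k X) + (Y - swapConj j k Y) by abel, smul_add]
    · simp [h]
  map_smul' c X := by
    unfold lapSup
    simp only [RingHom.id_apply, Finset.smul_sum]
    refine Finset.sum_congr rfl fun j _ => Finset.sum_congr rfl fun k _ => ?_
    by_cases h : j < k
    · simp only [if_pos h, swapConj_csmul]
      rw [show c • X - c • swapConj j k X = c • (X - swapConj j k X) by
        rw [smul_sub], smul_comm]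
    · simp [h]

lemma permProj_eq_smul_sum {n : ℕ} (X : QMat n) :
    permProj X = ((n.factorial : ℂ)⁻¹) • ∑ π : Equiv.Perm (Fin n), permConj π X := by
  ext f g
  simp [permProj, permConj, Matrix.sum_apply, Matrix.smul_apply, smul_eq_mul]

lemma permProj_permConj {n : ℕ} (σ : Equiv.Perm (Fin n)) (X : QMat n) :
    permProj (permConj σ X) = permProj X := by
  ext f g
  simp only [permProj, permConj, Matrix.of_apply]
  congr 1
  rw [← Equiv.sum_comp (Equiv.mulRight σ) (fun π => X (f ∘ π) (g ∘ π))]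
  rfl

lemma permConj_permProj {n : ℕ} (σ : Equiv.Perm (Fin n)) (X : QMat n) :
    permConj σ (permProj X) = permProj X := by
  ext f g
  simp only [permProj, permConj, Matrix.of_apply]
  congr 1
  rw [← Equiv.sum_comp (Equiv.mulLeft σ) (fun π => X (f ∘ π) (g ∘ π))]
  rfl

lemma fact_ne_zero' (n : ℕ) : ((n.factorial : ℂ)) ≠ 0 :=
  Nat.cast_ne_zero.mpr (Nat.factorial_ne_zero n)

lemma permProj_permProj {n : ℕ} (X : QMat n) : permProj (permProj X) = permProj X := by
  have h : permProj (permProj X)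
      = permProjL n (((n.factorial : ℂ)⁻¹) • ∑ π : Equiv.Perm (Fin n), permConj π X) := by
    rw [← permProj_eq_smul_sum]; rfl
  rw [h, _root_.map_smul, map_sum]
  have h2 : ∀ π : Equiv.Perm (Fin n), permProjL n (permConj π X) = permProj X :=
    fun π => permProj_permConj π X
  simp only [h2]
  rw [Finset.sum_const, Finset.card_univ, Fintype.card_perm, Fintype.card_fin,
    ← Nat.cast_smul_eq_nsmul ℂ, smul_smul, inv_mul_cancel₀ (fact_ne_zero' n), one_smul]

lemma inner_permProj_left {n : ℕ} (X Y : QMat n) :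
    ⟪eQ n (permProj X), eQ n Y⟫ = ⟪eQ n X, eQ n (permProj Y)⟫ := by
  rw [permProj_eq_smul_sum X, permProj_eq_smul_sum Y]
  rw [_root_.map_smul, _root_.map_smul, map_sum, map_sum, inner_smul_left, inner_smul_right,
    sum_inner, inner_sum]
  have hc : (starRingEnd ℂ) ((n.factorial : ℂ)⁻¹) = (n.factorial : ℂ)⁻¹ := by
    simp
  rw [hc]
  congr 1
  rw [← Equiv.sum_comp (Equiv.inv (Equiv.Perm (Fin n)))
    (fun π => ⟪eQ n X, eQ n (permConj π Y)⟫)]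
  exact Finset.sum_congr rfl fun π _ => inner_permConj_left π X Y

lemma lapSup_permProj {n : ℕ} (a : Fin n → Fin n → ℝ) (X : QMat n) :
    lapSup a (permProj X) = 0 := by
  unfold lapSup
  refine Finset.sum_eq_zero fun j _ => Finset.sum_eq_zero fun k _ => ?_
  split
  · rw [swapConj_eq_permConj, permConj_permProj]; simp
  · rfl

lemma permProj_coupling {n : ℕ} (a : Fin n → Fin n → ℝ) (X : QMat n) :
    permProj (coupling a X) = 0 := by
  have h : permProj (coupling a X) = permProjL n (coupling a X) := rfl
  rw [h]
  unfold coupling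
  rw [map_sum]
  refine Finset.sum_eq_zero fun j _ => ?_
  rw [map_sum]
  refine Finset.sum_eq_zero fun k _ => ?_
  split
  · rw [real_smul_eq, _root_.map_smul, map_sub]
    have h1 : permProjL n (swapConj j k X) = permProj X := by
      rw [show permProjL n (swapConj j k X) = permProj (swapConj j k X) from rfl,
        swapConj_eq_permConj, permProj_permConj]
    have h2 : permProjL n X = permProj X := rfl
    rw [h1, h2, sub_self, smul_zero]
  · exact map_zero _

lemma coupling_eq_neg_lapSup {n : ℕ} (a : Fin n → Fin n → ℝ) (X : QMat n) :
    coupling a X = - lapSup a X := by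
  unfold coupling lapSup
  rw [← Finset.sum_neg_distrib]
  refine Finset.sum_congr rfl fun j _ => ?_
  rw [← Finset.sum_neg_distrib]
  refine Finset.sum_congr rfl fun k _ => ?_
  split
  · rw [← smul_neg, neg_sub]
  · simp

lemma inner_lapSup_left {n : ℕ} (a : Fin n → Fin n → ℝ) (X Y : QMat n) :
    ⟪eQ n (lapSup a X), eQ n Y⟫ = ⟪eQ n X, eQ n (lapSup a Y)⟫ := by
  have key : ∀ (j k : Fin n), ⟪eQ n (swapConj j k X), eQ n Y⟫
      = ⟪eQ n X, eQ n (swapConj j k Y)⟫ := fun j k => by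
    rw [swapConj_eq_permConj, swapConj_eq_permConj, inner_permConj_left, Equiv.swap_inv]
  unfold lapSup
  rw [map_sum, map_sum, sum_inner, inner_sum]
  refine Finset.sum_congr rfl fun j _ => ?_
  rw [map_sum, map_sum, sum_inner, inner_sum]
  refine Finset.sum_congr rfl fun k _ => ?_
  by_cases h : j < k
  · rw [if_pos h, if_pos h, real_smul_eq, real_smul_eq, _root_.map_smul, _root_.map_smul,
      inner_smul_left, inner_smul_right, map_sub, map_sub,
      inner_sub_left, inner_sub_right, key j k, Complex.conj_ofReal]
  · simp [h]

/-- kernel of the Laplacian is the permutation-invariant space (needs connectivity). -/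
lemma permProj_eq_self_of_lapSup_eq_zero {n : ℕ} (a : Fin n → Fin n → ℝ)
    (ha_nonneg : ∀ j k, 0 ≤ a j k) (ha_symm : ∀ j k, a j k = a k j)
    (ha_conn : (SimpleGraph.fromRel fun j k => 0 < a j k).Connected)
    (Z : QMat n) (hZ : lapSup a Z = 0) : permProj Z = Z := by
  classical
  -- quadratic form identity
  have hq : ∀ j k : Fin n, 2 * RCLike.re ⟪eQ n Z, eQ n (Z - swapConj j k Z)⟫
      = ‖Z - swapConj j k Z‖ ^ 2 := by
    intro j k
    have h1 : ⟪eQ n (swapConj j k Z), eQ n (swapConj j k Z)⟫ = ⟪eQ n Z, eQ n Z⟫ := by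
      rw [swapConj_eq_permConj]; exact inner_permConj _ _ _
    have h2 : RCLike.re ⟪eQ n (swapConj j k Z), eQ n Z⟫
        = RCLike.re ⟪eQ n Z, eQ n (swapConj j k Z)⟫ := inner_re_symm _ _
    have h3 : ‖Z - swapConj j k Z‖ ^ 2
        = RCLike.re ⟪eQ n (Z - swapConj j k Z), eQ n (Z - swapConj j k Z)⟫ := by
      rw [inner_self_eq_norm_sq, (eQ n).norm_map]
    rw [h3, map_sub, inner_sub_left, inner_sub_right, inner_sub_right]
    simp only [map_sub]
    linarith [congrArg RCLike.re h1]
  -- the total quadratic form vanishes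
  have h0 : ⟪eQ n Z, eQ n (lapSup a Z)⟫ = ∑ j, ∑ k, if j < k
      then ((a j k : ℂ) * ⟪eQ n Z, eQ n (Z - swapConj j k Z)⟫) else 0 := by
    unfold lapSup
    rw [map_sum, inner_sum]
    refine Finset.sum_congr rfl fun j _ => ?_
    rw [map_sum, inner_sum]
    refine Finset.sum_congr rfl fun k _ => ?_
    by_cases h : j < k
    · rw [if_pos h, if_pos h, real_smul_eq, _root_.map_smul, inner_smul_right]
    · simp [h]
  have hre : ∀ (r : ℝ) (w : ℂ), RCLike.re ((r:ℂ) * w) = r * RCLike.re w := fun r w => by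
    rw [← Complex.real_smul, RCLike.smul_re]
  have hE : (∑ j, ∑ k, if j < k
      then a j k * RCLike.re ⟪eQ n Z, eQ n (Z - swapConj j k Z)⟫ else 0) = 0 := by
    have h1 : (0:ℝ) = RCLike.re ⟪eQ n Z, eQ n (lapSup a Z)⟫ := by rw [hZ]; simp
    rw [h0] at h1
    simp only [map_sum, apply_ite RCLike.re, map_zero, hre] at h1
    exact h1.symm
  -- hence each edge term vanishes
  have hterm : ∀ j k : Fin n, j < k → 0 < a j k → swapConj j k Z = Z := by
    intro j k hjk hajk
    have hnn : ∀ j k : Fin n, (0:ℝ) ≤ (if j < k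
        then a j k * RCLike.re ⟪eQ n Z, eQ n (Z - swapConj j k Z)⟫ else 0) := by
      intro j k
      split
      · have := hq j k
        have h2 : (0:ℝ) ≤ ‖Z - swapConj j k Z‖ ^ 2 := sq_nonneg _
        have h3 : 0 ≤ RCLike.re ⟪eQ n Z, eQ n (Z - swapConj j k Z)⟫ := by linarith
        exact mul_nonneg (ha_nonneg j k) h3
      · exact le_refl _
    have hz : ∀ j' ∈ Finset.univ (α := Fin n), ∀ k' ∈ Finset.univ (α := Fin n),
        (if j' < k' then a j' k' * RCLike.re ⟪eQ n Z, eQ n (Z - swapConj j' k' Z)⟫ else 0)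
          = 0 := by
      have h1 := (Finset.sum_eq_zero_iff_of_nonneg
        (fun j' _ => Finset.sum_nonneg (fun k' _ => hnn j' k'))).mp hE
      intro j' hj' k' hk'
      exact (Finset.sum_eq_zero_iff_of_nonneg (fun k' _ => hnn j' k')).mp
        (h1 j' hj') k' hk'
    have h4 := hz j (Finset.mem_univ j) k (Finset.mem_univ k)
    rw [if_pos hjk] at h4
    have h5 : RCLike.re ⟪eQ n Z, eQ n (Z - swapConj j k Z)⟫ = 0 := by
      rcases mul_eq_zero.mp h4 with h | h
      · exact absurd h (ne_of_gt hajk)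
      · exact h
    have h6 : ‖Z - swapConj j k Z‖ ^ 2 = 0 := by rw [← hq j k, h5]; ring
    have h7 : Z - swapConj j k Z = 0 := by
      rwa [pow_eq_zero_iff (two_ne_zero), norm_eq_zero] at h6
    exact (sub_eq_zero.mp h7).symm
  -- edges in either order
  have hedge : ∀ u v : Fin n, u ≠ v → 0 < a u v → permConj (Equiv.swap u v) Z = Z := by
    intro u v huv hauv
    rcases lt_or_gt_of_ne huv with h | h
    · rw [← swapConj_eq_permConj]; exact hterm u v h hauv
    · rw [Equiv.swap_comm, ← swapConj_eq_permConj]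
      exact hterm v u h (by rwa [ha_symm v u])
  have hZmul : ∀ π σ : Equiv.Perm (Fin n), permConj π Z = Z → permConj σ Z = Z →
      permConj (π * σ) Z = Z := fun π σ hπ hσ => by rw [← permConj_permConj, hσ, hπ]
  have hZinv : ∀ π : Equiv.Perm (Fin n), permConj π Z = Z → permConj π⁻¹ Z = Z := by
    intro π h
    calc permConj π⁻¹ Z = permConj π⁻¹ (permConj π Z) := by rw [h]
      _ = Z := by rw [permConj_permConj, inv_mul_cancel, permConj_one]
  -- walk induction
  have hwalk : ∀ (u v : Fin n)
      (p : (SimpleGraph.fromRel fun j k => 0 < a j k).Walk u v),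
      permConj (Equiv.swap u v) Z = Z := by
    intro u v p
    induction p with
    | nil =>
      rw [Equiv.swap_self]
      exact permConj_one Z
    | @cons u m v h p ih =>
      rw [SimpleGraph.fromRel_adj] at h
      obtain ⟨hne, hr⟩ := h
      have hav : 0 < a u m := by
        rcases hr with h | h
        · exact h
        · rwa [ha_symm u m]
      have h1 : permConj (Equiv.swap u m) Z = Z := hedge u m hne hav
      by_cases huv : u = v
      · subst huv; rw [Equiv.swap_self]; exact permConj_one Z
      by_cases hmv : m = v
      · subst hmv; exact h1
      have key := Equiv.swap_mul_swap_mul_swap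
        (show v ≠ u from Ne.symm huv) (show v ≠ m from fun h => hmv h.symm)
      -- key : swap u m * swap v u * swap u m = swap m v
      have hprod : Equiv.swap u v
          = Equiv.swap u m * Equiv.swap m v * Equiv.swap u m := by
        rw [← key]
        have e1 : Equiv.swap u m * (Equiv.swap u m * Equiv.swap v u * Equiv.swap u m)
            * Equiv.swap u m
            = (Equiv.swap u m * Equiv.swap u m) * Equiv.swap v u
              * (Equiv.swap u m * Equiv.swap u m) := by group
        rw [e1, Equiv.swap_mul_self, one_mul, mul_one, Equiv.swap_comm]
      rw [hprod]
      exact hZmul _ _ (hZmul _ _ h1 ih) h1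
  -- all swaps fix Z
  have hswaps : ∀ σ : Equiv.Perm (Fin n), σ.IsSwap → permConj σ Z = Z := by
    rintro σ ⟨x, y, hxy, rfl⟩
    exact (ha_conn.preconnected x y).elim fun p => hwalk x y p
  -- all permutations fix Z
  have hall : ∀ π : Equiv.Perm (Fin n), permConj π Z = Z := by
    intro π
    have hmem : π ∈ Subgroup.closure {σ : Equiv.Perm (Fin n) | σ.IsSwap} := by
      rw [Equiv.Perm.closure_isSwap]; trivial
    exact Subgroup.closure_induction (fun σ hσ => hswaps σ hσ) (permConj_one Z)
      (fun π σ _ _ hπ hσ => hZmul π σ hπ hσ) (fun π _ hπ => hZinv π hπ) hmem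
  -- conclude
  ext f g
  have he : ∀ π : Equiv.Perm (Fin n), Z (f ∘ π) (g ∘ π) = Z f g := by
    intro π
    exact congrFun (congrFun (hall π) f) g
  simp only [permProj, Matrix.of_apply]
  rw [Finset.sum_congr rfl fun π _ => he π, Finset.sum_const, Finset.card_univ,
    Fintype.card_perm, Fintype.card_fin, nsmul_eq_mul, ← mul_assoc,
    inv_mul_cancel₀ (fact_ne_zero' n), one_mul]

/-- spectral gap -/
lemma gap {n : ℕ} (a : Fin n → Fin n → ℝ)
    (ha_nonneg : ∀ j k, 0 ≤ a j k) (ha_symm : ∀ j k, a j k = a k j)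
    (ha_conn : (SimpleGraph.fromRel fun j k => 0 < a j k).Connected)
    (lam : ℝ)
    (hlam : IsLeast {r : ℝ | r ≠ 0 ∧ ∃ X : QMat n, X ≠ 0 ∧ lapSup a X = r • X} lam)
    (X : QMat n) (hX : permProj X = 0) :
    lam * ‖X‖ ^ 2 ≤ RCLike.re ⟪eQ n X, eQ n (lapSup a X)⟫ := by
  classical
  let T : Vq n →ₗ[ℂ] Vq n :=
    (eQ n).toLinearEquiv.toLinearMap ∘ₗ lapSupL a ∘ₗ (eQ n).symm.toLinearEquiv.toLinearMap
  have hT_apply : ∀ Y : QMat n, T (eQ n Y) = eQ n (lapSup a Y) := by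
    intro Y
    show eQ n (lapSupL a ((eQ n).symm (eQ n Y))) = eQ n (lapSup a Y)
    rw [(eQ n).symm_apply_apply]
    rfl
  have hsymm : T.IsSymmetric := by
    intro x y
    have hx : x = eQ n ((eQ n).symm x) := ((eQ n).apply_symm_apply x).symm
    have hy : y = eQ n ((eQ n).symm y) := ((eQ n).apply_symm_apply y).symm
    rw [hx, hy, hT_apply, hT_apply]
    exact inner_lapSup_left a _ _
  have hdim : Module.finrank ℂ (Vq n)
      = Fintype.card ((Fin n → Fin 2) × (Fin n → Fin 2)) := finrank_euclideanSpace
  let b := hsymm.eigenvectorBasis hdim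
  let μ := hsymm.eigenvalues hdim
  have happly : ∀ i, T (b i) = (μ i : ℂ) • b i := hsymm.apply_eigenvectorBasis hdim
  have hμ : ∀ i, μ i = 0 ∨ lam ≤ μ i := by
    intro i
    by_cases h : μ i = 0
    · exact Or.inl h
    · right
      apply hlam.2
      refine ⟨h, (eQ n).symm (b i), ?_, ?_⟩
      · intro hzero
        have hbne : b i ≠ 0 := b.toBasis.ne_zero i
        apply hbne
        have := congrArg (eQ n) hzero
        rw [(eQ n).apply_symm_apply, map_zero] at this
        exact this
      · apply (eQ n).injective
        rw [← hT_apply, (eQ n).apply_symm_apply, happly, real_smul_eq, _root_.map_smul,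
          (eQ n).apply_symm_apply]
  have hc0 : ∀ i, μ i = 0 → ⟪b i, eQ n X⟫ = 0 := by
    intro i h0
    have hz : lapSup a ((eQ n).symm (b i)) = 0 := by
      apply (eQ n).injective
      rw [← hT_apply, (eQ n).apply_symm_apply, happly, h0, map_zero]
      simp
    have hperm := permProj_eq_self_of_lapSup_eq_zero a ha_nonneg ha_symm ha_conn _ hz
    calc ⟪b i, eQ n X⟫ = ⟪eQ n ((eQ n).symm (b i)), eQ n X⟫ := by
          rw [(eQ n).apply_symm_apply]
      _ = ⟪eQ n (permProj ((eQ n).symm (b i))), eQ n X⟫ := by rw [hperm]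
      _ = ⟪eQ n ((eQ n).symm (b i)), eQ n (permProj X)⟫ := inner_permProj_left _ _
      _ = 0 := by rw [hX, map_zero, inner_zero_right]
  set v := eQ n X with hv_def
  have hv : ∀ i, b.repr (T v) i = (μ i : ℂ) * b.repr v i := by
    intro i
    rw [b.repr_apply_apply, b.repr_apply_apply]
    calc ⟪b i, T v⟫ = ⟪T (b i), v⟫ := (hsymm _ _).symm
      _ = ⟪(μ i : ℂ) • b i, v⟫ := by rw [happly]
      _ = (μ i : ℂ) * ⟪b i, v⟫ := by
          rw [inner_smul_left, Complex.conj_ofReal]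
  have hTv : RCLike.re ⟪v, T v⟫ = ∑ i, μ i * ‖b.repr v i‖ ^ 2 := by
    rw [← b.repr.inner_map_map v (T v), PiLp.inner_apply]
    simp only [RCLike.inner_apply, hv]
    rw [map_sum]
    refine Finset.sum_congr rfl fun i _ => ?_
    rw [show (μ i : ℂ) * b.repr v i * (starRingEnd ℂ) (b.repr v i)
        = (μ i : ℂ) * ((starRingEnd ℂ) (b.repr v i) * b.repr v i) by ring,
      RCLike.conj_mul]
    simp [← Complex.ofReal_pow]
  have hnv : ‖v‖ ^ 2 = ∑ i, ‖b.repr v i‖ ^ 2 := by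
    rw [← b.repr.norm_map v, EuclideanSpace.norm_eq, Real.sq_sqrt]
    exact Finset.sum_nonneg fun i _ => sq_nonneg _
  have hgoal : lam * ‖v‖ ^ 2 ≤ RCLike.re ⟪v, T v⟫ := by
    rw [hTv, hnv, Finset.mul_sum]
    refine Finset.sum_le_sum fun i _ => ?_
    rcases hμ i with h | h
    · have : b.repr v i = 0 := by
        rw [b.repr_apply_apply]; exact hc0 i h
      rw [this, h]; simp
    · have h2 : (0:ℝ) ≤ ‖b.repr v i‖ ^ 2 := sq_nonneg _
      nlinarith
  calc lam * ‖X‖ ^ 2 = lam * ‖v‖ ^ 2 := by rw [hv_def, (eQ n).norm_map]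
    _ ≤ RCLike.re ⟪v, T v⟫ := hgoal
    _ = RCLike.re ⟪eQ n X, eQ n (lapSup a X)⟫ := by rw [hv_def, hT_apply]

lemma psd_norm_le_one {n : ℕ} (ρ : QMat n) (h : ρ.PosSemidef) (ht : ρ.trace = 1) :
    ‖ρ‖ ≤ 1 := by
  classical
  obtain ⟨S, hSS, hSh⟩ : ∃ S : QMat n, S * S = ρ ∧ Sᴴ = S := by
    open scoped MatrixOrder in
    exact ⟨CFC.sqrt ρ, CFC.sqrt_mul_sqrt_self ρ h.nonneg, (CFC.sqrt_nonneg ρ).posSemidef.isHermitian⟩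
  have h1 : ‖ρ‖ ≤ ‖S‖ * ‖S‖ := by
    rw [← hSS]; exact Matrix.frobenius_norm_mul S S
  have h2 : ‖S‖ ^ 2 = RCLike.re ⟪eQ n S, eQ n S⟫ := by
    rw [inner_self_eq_norm_sq, (eQ n).norm_map]
  have h3 : ⟪eQ n S, eQ n S⟫ = ρ.trace := by
    rw [inner_eQ, ← hSS]
    simp only [Matrix.trace, Matrix.diag, Matrix.mul_apply]
    refine Finset.sum_congr rfl fun f _ => Finset.sum_congr rfl fun g _ => ?_
    have hge : S g f = (starRingEnd ℂ) (S f g) := by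
      conv_lhs => rw [← hSh]
      rfl
    rw [hge]; ring
  have h4 : ‖S‖ ^ 2 = 1 := by
    rw [h2, h3, ht]; simp
  nlinarith [norm_nonneg ρ]

lemma gron (G : ℝ → ℝ) (opA K lam : ℝ) (hopA : 0 ≤ opA) (hK : 0 < K) (hlam : 0 < lam)
    (hG0 : G 0 = 0) (hGnn : ∀ t, 0 ≤ G t)
    (hd : ∀ t ≥ (0:ℝ), ∃ d, HasDerivAt G d t ∧
      d ≤ 2 * (opA * Real.sqrt (G t) - K * lam * G t)) :
    ∀ t ≥ (0:ℝ), G t ≤ (opA / (K * lam)) ^ 2 := by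
  intro t0 ht0
  by_contra hcon
  push_neg at hcon
  set C := opA / (K * lam) with hC
  have hKl : 0 < K * lam := mul_pos hK hlam
  have hCnn : 0 ≤ C := div_nonneg hopA hKl.le
  have hCe : K * lam * C = opA := by
    rw [hC]; field_simp
  have hco : ∀ s : Set ℝ, s ⊆ Set.Ici 0 → ContinuousOn G s := by
    intro s hs
    intro x hx
    obtain ⟨d, hdd, _⟩ := hd x (hs hx)
    exact hdd.continuousAt.continuousWithinAt
  have ht0pos : 0 < t0 := by
    rcases eq_or_lt_of_le ht0 with h | h
    · exfalso; rw [← h, hG0] at hcon; nlinarith [sq_nonneg C]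
    · exact h
  set Sset := {t : ℝ | t ∈ Set.Icc 0 t0 ∧ G t ≤ C ^ 2} with hSset
  have hsub : Sset ⊆ Set.Icc 0 t0 := fun x hx => hx.1
  have hclosed : IsClosed Sset := by
    have heq : Sset = Set.Icc 0 t0 ∩ G ⁻¹' (Set.Iic (C ^ 2)) := rfl
    rw [heq]
    exact ContinuousOn.preimage_isClosed_of_isClosed
      (hco _ (fun x hx => hx.1)) isClosed_Icc isClosed_Iic
  have hne : (0:ℝ) ∈ Sset := ⟨⟨le_refl 0, ht0⟩, by rw [hG0]; positivity⟩
  have hbdd : BddAbove Sset := ⟨t0, fun x hx => hx.1.2⟩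
  have hcompact : IsCompact Sset :=
    IsCompact.of_isClosed_subset isCompact_Icc hclosed hsub
  set s := sSup Sset with hs_def
  have hsmem : s ∈ Sset := hcompact.sSup_mem ⟨0, hne⟩
  have hs0 : 0 ≤ s := hsmem.1.1
  have hst0 : s ≤ t0 := hsmem.1.2
  have hGs : G s ≤ C ^ 2 := hsmem.2
  have hst0' : s < t0 := lt_of_le_of_ne hst0 (fun h => by rw [h] at hGs; linarith)
  have hgt : ∀ x, s < x → x ≤ t0 → C ^ 2 < G x := by
    intro x hsx hxt0
    by_contra hle; push_neg at hle
    have hxmem : x ∈ Sset := ⟨⟨le_trans hs0 hsx.le, hxt0⟩, hle⟩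
    exact absurd (le_csSup hbdd hxmem) (not_le.mpr hsx)
  have hanti : StrictAntiOn G (Set.Icc s t0) := by
    apply strictAntiOn_of_deriv_neg (convex_Icc s t0)
    · exact hco _ (fun x hx => le_trans hs0 hx.1)
    · intro x hx
      rw [interior_Icc] at hx
      have hx0 : 0 ≤ x := le_trans hs0 hx.1.le
      obtain ⟨d, hdd, hdle⟩ := hd x hx0
      rw [hdd.deriv]
      have hGx : C ^ 2 < G x := hgt x hx.1 hx.2.le
      set sx := Real.sqrt (G x) with hsx_def
      have hsq : sx ^ 2 = G x := Real.sq_sqrt (hGnn x)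
      have hCs : C < sx := by
        have h5 := Real.sqrt_lt_sqrt (sq_nonneg C) hGx
        rwa [Real.sqrt_sq hCnn] at h5
      have hsp : 0 < sx := lt_of_le_of_lt hCnn hCs
      rw [← hsq, ← hCe] at hdle
      nlinarith [mul_pos hKl (mul_pos (sub_pos.mpr hCs) hsp)]
  have h1 : G t0 < G s := hanti ⟨le_rfl, hst0⟩ ⟨hst0, le_rfl⟩ hst0'
  linarith

lemma re_coe_mul (r : ℝ) (w : ℂ) : RCLike.re ((r:ℂ) * w) = r * RCLike.re w := by
  rw [← Complex.real_smul, RCLike.smul_re]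

lemma permProj_sub {n : ℕ} (X Y : QMat n) :
    permProj (X - Y) = permProj X - permProj Y := map_sub (permProjL n) X Y

lemma lapSup_sub {n : ℕ} (a : Fin n → Fin n → ℝ) (X Y : QMat n) :
    lapSup a (X - Y) = lapSup a X - lapSup a Y := map_sub (lapSupL a) X Y

lemma inner_permProj_self {n : ℕ} (Z : QMat n) :
    ⟪eQ n (permProj Z), eQ n (Z - permProj Z)⟫ = 0 := by
  rw [map_sub, inner_sub_right]
  have h1 : ⟪eQ n (permProj Z), eQ n Z⟫ = ⟪eQ n Z, eQ n (permProj Z)⟫ :=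
    inner_permProj_left Z Z
  have h2 : ⟪eQ n (permProj Z), eQ n (permProj Z)⟫ = ⟪eQ n Z, eQ n (permProj Z)⟫ := by
    rw [inner_permProj_left Z (permProj Z), permProj_permProj]
  rw [h1, h2, sub_self]

lemma norm_sub_permProj_le {n : ℕ} (Z : QMat n) : ‖Z - permProj Z‖ ≤ ‖Z‖ := by
  have hpyth := norm_add_sq_eq_norm_sq_add_norm_sq_of_inner_eq_zero
    (eQ n (permProj Z)) (eQ n (Z - permProj Z)) (inner_permProj_self Z)
  have hsum : eQ n (permProj Z) + eQ n (Z - permProj Z) = eQ n Z := by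
    rw [← map_add]; congr 1; abel
  rw [hsum, (eQ n).norm_map, (eQ n).norm_map, (eQ n).norm_map] at hpyth
  nlinarith [norm_nonneg (permProj Z), norm_nonneg (Z - permProj Z), norm_nonneg Z]

lemma main_core {n : ℕ} {ι : Type} [Fintype ι] (hbar : ℝ)
    (H : QMat n) (γ : ι → ℝ) (L : ι → QMat n)
    (a : Fin n → Fin n → ℝ) (ha_nonneg : ∀ j k, 0 ≤ a j k)
    (ha_symm : ∀ j k, a j k = a k j)
    (ha_conn : (SimpleGraph.fromRel fun j k => 0 < a j k).Connected)
    (lam : ℝ) (hlam_pos : 0 < lam)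
    (hlam : IsLeast {r : ℝ | r ≠ 0 ∧ ∃ X : QMat n, X ≠ 0 ∧ lapSup a X = r • X} lam)
    (opA : ℝ)
    (hopA : 0 ≤ opA ∧ ∀ X : QMat n, ‖drift hbar H γ L X‖ ≤ opA * ‖X‖)
    (K : ℝ) (hK : 0 < K) (ρ : ℝ → QMat n)
    (hpos : ∀ t ≥ (0 : ℝ), (ρ t).PosSemidef ∧ (ρ t).trace = 1)
    (hderiv : ∀ t ≥ (0 : ℝ),
      HasDerivAt ρ (drift hbar H γ L (ρ t) + K • coupling a (ρ t)) t)
    (hinit : permProj (ρ 0) = ρ 0) :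
    ∀ t ≥ (0 : ℝ), ‖ρ t - permProj (ρ t)‖ ≤ opA / (K * lam) := by
  classical
  set A : ℝ → QMat n := fun t => drift hbar H γ L (ρ t) with hA_def
  set D : ℝ → QMat n := fun t => A t + K • coupling a (ρ t) with hD_def
  set y : ℝ → QMat n := fun t => ρ t - permProj (ρ t) with hy_def
  -- continuous linear maps
  let Pc : QMat n →L[ℂ] QMat n := LinearMap.toContinuousLinearMap (permProjL n)
  have hPc : ∀ X : QMat n, Pc X = permProj X := fun X => rfl
  let Ec : QMat n →L[ℂ] Vq n := (eQ n).toLinearIsometry.toContinuousLinearMap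
  have hEc : ∀ X : QMat n, Ec X = eQ n X := fun X => rfl
  set w : ℝ → Vq n := fun t => eQ n (y t) with hw_def
  -- derivative of y
  have hyd : ∀ t ≥ (0:ℝ), HasDerivAt y (D t - permProj (D t)) t := by
    intro t ht
    have h1 : HasDerivAt (fun u => permProj (ρ u)) (permProj (D t)) t := by
      have := ((Pc.restrictScalars ℝ).hasFDerivAt (x := ρ t)).comp_hasDerivAt t
        (hderiv t ht)
      exact this
    exact ((hderiv t ht).sub h1)
  -- derivative of w
  have hwd : ∀ t ≥ (0:ℝ), HasDerivAt w (eQ n (D t - permProj (D t))) t := by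
    intro t ht
    have := ((Ec.restrictScalars ℝ).hasFDerivAt (x := y t)).comp_hasDerivAt t
      (hyd t ht)
    exact this
  -- simplify the derivative
  have hDsimp : ∀ t, D t - permProj (D t)
      = (A t - permProj (A t)) - K • lapSup a (y t) := by
    intro t
    have hlapy : lapSup a (y t) = lapSup a (ρ t) := by
      simp only [hy_def]
      rw [lapSup_sub, lapSup_permProj, sub_zero]
    have hPD : permProj (D t) = permProj (A t) := by
      simp only [hD_def]
      rw [show permProj (A t + K • coupling a (ρ t))
          = permProjL n (A t) + permProjL n (K • coupling a (ρ t)) from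
        map_add (permProjL n) _ _]
      have h2 : permProjL n (K • coupling a (ρ t)) = 0 := by
        rw [real_smul_eq, _root_.map_smul,
          show permProjL n (coupling a (ρ t)) = permProj (coupling a (ρ t)) from rfl,
          permProj_coupling, smul_zero]
      rw [h2, add_zero]
      rfl
    have hcoup : coupling a (ρ t) = - lapSup a (y t) := by
      rw [coupling_eq_neg_lapSup, hlapy]
    rw [hPD]
    simp only [hD_def]
    rw [hcoup, smul_neg]
    abel
  -- G and its derivative
  set G : ℝ → ℝ := fun t => RCLike.re (⟪w t, w t⟫) with hG_def
  have hG_eq : ∀ t, G t = ‖w t‖ ^ 2 := fun t => inner_self_eq_norm_sq _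
  have hGnn : ∀ t, 0 ≤ G t := fun t => by rw [hG_eq]; positivity
  have hwy : ∀ t, ‖w t‖ = ‖y t‖ := fun t => (eQ n).norm_map _
  have hG0 : G 0 = 0 := by
    have hy0 : y 0 = 0 := by
      simp only [hy_def]
      rw [hinit, sub_self]
    rw [hG_eq]
    simp only [hw_def]
    rw [hy0, map_zero, norm_zero]
    ring
  -- permProj of y is zero
  have hPy : ∀ t, permProj (y t) = 0 := by
    intro t
    simp only [hy_def]
    rw [permProj_sub, permProj_permProj, sub_self]
  -- the derivative bound
  have hd : ∀ t ≥ (0:ℝ), ∃ d, HasDerivAt G d t ∧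
      d ≤ 2 * (opA * Real.sqrt (G t) - K * lam * G t) := by
    intro t ht
    have hw' := hwd t ht
    set w' : Vq n := eQ n (D t - permProj (D t)) with hw'_def
    have hIn : HasDerivAt (fun u => (⟪w u, w u⟫ : ℂ)) (⟪w t, w'⟫ + ⟪w', w t⟫) t :=
      hw'.inner ℂ hw'
    have hGd : HasDerivAt G (2 * RCLike.re ⟪w t, w'⟫) t := by
      have h3 := (RCLike.reCLM.hasFDerivAt
        (x := (⟪w t, w t⟫ : ℂ))).comp_hasDerivAt t hIn
      have h4 : RCLike.reCLM (⟪w t, w'⟫ + ⟪w', w t⟫) = 2 * RCLike.re ⟪w t, w'⟫ := by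
        simp only [map_add]
        rw [show (RCLike.reCLM : ℂ →L[ℝ] ℝ) ⟪w t, w'⟫ = RCLike.re ⟪w t, w'⟫ from rfl,
          show (RCLike.reCLM : ℂ →L[ℝ] ℝ) ⟪w', w t⟫ = RCLike.re ⟪w', w t⟫ from rfl,
          inner_re_symm]
        ring
      rw [h4] at h3
      exact h3
    refine ⟨_, hGd, ?_⟩
    -- split the inner product
    have hsplit : RCLike.re ⟪w t, w'⟫
        = RCLike.re ⟪w t, eQ n (A t - permProj (A t))⟫
          - K * RCLike.re ⟪w t, eQ n (lapSup a (y t))⟫ := by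
      rw [hw'_def, hDsimp t, map_sub, inner_sub_right, real_smul_eq, _root_.map_smul,
        inner_smul_right, map_sub, re_coe_mul]
    -- first term
    have hterm1 : RCLike.re ⟪w t, eQ n (A t - permProj (A t))⟫ ≤ opA * ‖w t‖ := by
      have h5 : RCLike.re ⟪w t, eQ n (A t - permProj (A t))⟫
          ≤ ‖(⟪w t, eQ n (A t - permProj (A t))⟫ : ℂ)‖ := RCLike.re_le_norm _
      have h6 : ‖(⟪w t, eQ n (A t - permProj (A t))⟫ : ℂ)‖
          ≤ ‖w t‖ * ‖eQ n (A t - permProj (A t))‖ := norm_inner_le_norm _ _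
      have h7 : ‖eQ n (A t - permProj (A t))‖ ≤ opA := by
        rw [(eQ n).norm_map]
        refine le_trans (norm_sub_permProj_le (A t)) ?_
        refine le_trans (hopA.2 (ρ t)) ?_
        have h8 := psd_norm_le_one (ρ t) (hpos t ht).1 (hpos t ht).2
        nlinarith [hopA.1]
      nlinarith [norm_nonneg (w t)]
    -- second term
    have hterm2 : lam * ‖w t‖ ^ 2 ≤ RCLike.re ⟪w t, eQ n (lapSup a (y t))⟫ := by
      have := gap a ha_nonneg ha_symm ha_conn lam hlam (y t) (hPy t)
      rw [hwy]
      exact this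
    have hsqrtG : Real.sqrt (G t) = ‖w t‖ := by
      rw [hG_eq, Real.sqrt_sq (norm_nonneg _)]
    rw [hsplit, hsqrtG, hG_eq]
    nlinarith [hterm1, hterm2, hK]
  -- apply the Gronwall-type lemma
  have hfinal := gron G opA K lam hopA.1 hK hlam_pos hG0 hGnn hd
  intro t ht
  have h9 := hfinal t ht
  have h10 : ‖y t‖ ^ 2 ≤ (opA / (K * lam)) ^ 2 := by
    rw [← hwy, ← hG_eq]; exact h9
  have hCnn : 0 ≤ opA / (K * lam) :=
    div_nonneg hopA.1 (mul_pos hK hlam_pos).le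
  have := norm_nonneg (y t)
  calc ‖ρ t - permProj (ρ t)‖ = ‖y t‖ := rfl
    _ ≤ opA / (K * lam) := by nlinarith

theorem stmt10 {n : ℕ} (hn : 2 ≤ n) {ι : Type} [Fintype ι] (hbar : ℝ) (hhbar : 0 < hbar)
    (H : QMat n) (hH : H.IsHermitian)
    (γ : ι → ℝ) (hγ : ∀ l, 0 < γ l) (L : ι → QMat n)
    -- symmetric nonnegative weights with zero diagonal and connected graph
    (a : Fin n → Fin n → ℝ) (ha_nonneg : ∀ j k, 0 ≤ a j k)
    (ha_symm : ∀ j k, a j k = a k j) (ha_diag : ∀ j, a j j = 0)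
    (ha_conn : (SimpleGraph.fromRel fun j k => 0 < a j k).Connected)
    -- `lam` is the smallest nonzero eigenvalue of the induced Laplacian superoperator `𝒬`
    (lam : ℝ) (hlam_pos : 0 < lam)
    (hlam : IsLeast {r : ℝ | r ≠ 0 ∧ ∃ X : QMat n, X ≠ 0 ∧ lapSup a X = r • X} lam)
    -- `opA` is the operator norm of `𝒜` w.r.t. the Frobenius norm
    (opA : ℝ)
    (hopA : IsLeast {c : ℝ | 0 ≤ c ∧ ∀ X : QMat n, ‖drift hbar H γ L X‖ ≤ c * ‖X‖} opA) :
    (∀ K > (0 : ℝ),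
      ∀ ρ : ℝ → QMat n,
        (∀ t ≥ (0 : ℝ), (ρ t).PosSemidef ∧ (ρ t).trace = 1) →
        (∀ t ≥ (0 : ℝ), HasDerivAt ρ (drift hbar H γ L (ρ t) + K • coupling a (ρ t)) t) →
        permProj (ρ 0) = ρ 0 →
        ∀ t ≥ (0 : ℝ), ‖ρ t - permProj (ρ t)‖ ≤ opA / (K * lam)) ∧
    (∀ η > (0 : ℝ), ∃ Kstar > (0 : ℝ), ∀ K ≥ Kstar,
      ∀ ρ : ℝ → QMat n,
        (∀ t ≥ (0 : ℝ), (ρ t).PosSemidef ∧ (ρ t).trace = 1) →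
        (∀ t ≥ (0 : ℝ), HasDerivAt ρ (drift hbar H γ L (ρ t) + K • coupling a (ρ t)) t) →
        permProj (ρ 0) = ρ 0 →
        ∀ t ≥ (0 : ℝ), ‖ρ t - permProj (ρ t)‖ ≤ η) := by
  have hopA' : 0 ≤ opA ∧ ∀ X : QMat n, ‖drift hbar H γ L X‖ ≤ opA * ‖X‖ := hopA.1
  constructor
  · intro K hK ρ hpos hderiv hinit t ht
    exact main_core hbar H γ L a ha_nonneg ha_symm ha_conn lam hlam_pos hlam opA
      hopA' K hK ρ hpos hderiv hinit t ht
  · intro η hη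
    refine ⟨max 1 (opA / (lam * η)), lt_of_lt_of_le one_pos (le_max_left _ _), ?_⟩
    intro K hKs ρ hpos hderiv hinit t ht
    have hK1 : (1:ℝ) ≤ K := le_trans (le_max_left _ _) hKs
    have hKpos : 0 < K := lt_of_lt_of_le one_pos hK1
    have hb := main_core hbar H γ L a ha_nonneg ha_symm ha_conn lam hlam_pos hlam opA
      hopA' K hKpos ρ hpos hderiv hinit t ht
    refine le_trans hb ?_
    have h2 : opA / (lam * η) ≤ K := le_trans (le_max_right _ _) hKs
    have h3 : opA ≤ K * (lam * η) := by
      rwa [div_le_iff₀ (mul_pos hlam_pos hη)] at h2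
    rw [div_le_iff₀ (mul_pos hKpos hlam_pos)]
    nlinarith

end
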